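/- Suppose β = {β_t : t ≥ 0} is an E₀-semigroup on a factorial probability space (M,φ) with φ faithful, which is a cocycle perturbation of another E₀-semigroup α = {α_t : t ≥ 0} on (M,φ), via a cocycle {u_t : t ≥ 0} (so u_{s+t} = u_s α_s(u_t) and β_t = Ad u_t ∘ α_t). Then: (1) {j(u_t) : t ≥ 0} is a cocycle exhibiting the commutant semigroup β′ = {β′_t} as a cocycle perturbation of α′ = {α′_t}; and (2) if each α_t and each β_t is equi-modular and extendable, then {u_t j(u_t) : t ≥ 0} is a cocycle exhibiting β⁽²⁾ = {β⁽²⁾_t} as a cocycle perturbation of α⁽²⁾ = {α⁽²⁾_t} on B(L²(M,φ)). -/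

import Mathlib

set_option synthInstance.maxHeartbeats 400000
set_option maxHeartbeats 1000000

open scoped InnerProductSpace ComplexConjugate

set_option linter.unusedSectionVars false
set_option linter.unusedVariables false

noncomputable section

namespace Paper

variable {H : Type} [NormedAddCommGroup H] [InnerProductSpace ℂ H] [CompleteSpace H]
variable {H' : Type} [NormedAddCommGroup H'] [InnerProductSpace ℂ H'] [CompleteSpace H']

/-- An operator is a (self-adjoint, idempotent) orthogonal projection. -/
def IsProjection (p : H →L[ℂ] H) : Prop := IsSelfAdjoint p ∧ p * p = p

/-- The vector state determined by a vector `Ω`. -/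
def vecState (Ω : H) (x : H →L[ℂ] H) : ℂ := ⟪x Ω, Ω⟫_ℂ

/-- A normal state on a von Neumann algebra, described via its canonical form as a
countable convex combination of vector states. -/
def IsNormalState (M : Set (H →L[ℂ] H)) (φ : (H →L[ℂ] H) → ℂ) : Prop :=
  ∃ ξ : ℕ → H, (Summable fun n => ‖ξ n‖ ^ 2) ∧ (∑' n, ‖ξ n‖ ^ 2) = 1 ∧
    ∀ x ∈ M, φ x = ∑' n, ⟪x (ξ n), ξ n⟫_ℂ

/-- Normality (complete additivity) of a map between operator algebras: it is `σ`-weakly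
continuous, equivalently it preserves sums of orthogonal families of projections lying in the
given domain `S`. -/
def IsNormalMapOn (S : Set (H →L[ℂ] H)) (Θ : (H →L[ℂ] H) → (H' →L[ℂ] H')) : Prop :=
  ∀ {ι : Type} (p : ι → (H →L[ℂ] H)) (q : H →L[ℂ] H),
    (∀ i, p i ∈ S) → q ∈ S →
    (∀ i, IsProjection (p i)) → (∀ i k, i ≠ k → p i * p k = 0) →
    (∀ ξ : H, HasSum (fun i => p i ξ) (q ξ)) →
    ∀ ξ : H', HasSum (fun i => Θ (p i) ξ) (Θ q ξ)

/-- `Θ` is a `*`-homomorphism on the subset `S` (typically a von Neumann algebra). -/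
structure IsStarHomOn (S : Set (H →L[ℂ] H)) (Θ : (H →L[ℂ] H) → (H' →L[ℂ] H')) : Prop where
  map_add : ∀ x ∈ S, ∀ y ∈ S, Θ (x + y) = Θ x + Θ y
  map_smul : ∀ (c : ℂ), ∀ x ∈ S, Θ (c • x) = c • Θ x
  map_mul : ∀ x ∈ S, ∀ y ∈ S, Θ (x * y) = Θ x * Θ y
  map_star : ∀ x ∈ S, Θ (star x) = star (Θ x)

/-- The (self-adjoint part of the) center of `S` is trivial. -/
def IsFactorSet (S : Set (H →L[ℂ] H)) : Prop :=
  ∀ x ∈ S, (∀ y ∈ S, x * y = y * x) → ∃ c : ℂ, x = c • (1 : H →L[ℂ] H)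

/-- A type `I` factor: a factor possessing a minimal projection. -/
def IsTypeIFactorSet (S : Set (H →L[ℂ] H)) : Prop :=
  IsFactorSet S ∧ ∃ p ∈ S, p ≠ 0 ∧ IsProjection p ∧
    ∀ q ∈ S, IsProjection q → q * p = q → q = 0 ∨ q = p

/-- `z` is the central support of the normal state `φ` of the von Neumann algebra `S`, i.e. the
smallest central projection of full measure. -/
structure IsCentralSupport (S : Set (H →L[ℂ] H)) (φ : (H →L[ℂ] H) → ℂ) (z : H →L[ℂ] H) :
    Prop where
  mem : z ∈ S
  proj : IsProjection z
  central : ∀ y ∈ S, z * y = y * z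
  full : φ z = 1
  min : ∀ w ∈ S, IsProjection w → (∀ y ∈ S, w * y = y * w) → φ w = 1 → z * w = z

/-- The von Neumann algebra generated by a (self-adjoint) set of operators. -/
def vN (S : Set (H →L[ℂ] H)) : Set (H →L[ℂ] H) := Set.centralizer (Set.centralizer S)

/-- Standard form data for a von Neumann algebra `M` with cyclic separating unit vector `Ω`:
`J` is the modular conjugation (an antiunitary involution fixing `Ω`, conjugating `M` onto its
commutant, and positive on the cone `{x j(x) Ω}`), and `j = J (·) J`. -/
structure StandardForm (M : VonNeumannAlgebra H) (Ω : H) (J : H → H)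
    (j : (H →L[ℂ] H) → (H →L[ℂ] H)) : Prop where
  unit : ‖Ω‖ = 1
  cyclic : Dense {ξ : H | ∃ x ∈ M, x Ω = ξ}
  separating : ∀ x ∈ M, x Ω = 0 → x = 0
  Jadd : ∀ ξ η : H, J (ξ + η) = J ξ + J η
  Jsmul : ∀ (c : ℂ) (ξ : H), J (c • ξ) = (starRingEnd ℂ) c • J ξ
  Jinvol : ∀ ξ : H, J (J ξ) = ξ
  Jinner : ∀ ξ η : H, ⟪J ξ, J η⟫_ℂ = ⟪η, ξ⟫_ℂ
  JΩ : J Ω = Ω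
  jdef : ∀ (x : H →L[ℂ] H) (ξ : H), j x ξ = J (x (J ξ))
  jmapsTo : ∀ x ∈ M, j x ∈ Set.centralizer (M : Set (H →L[ℂ] H))
  jsurj : ∀ y ∈ Set.centralizer (M : Set (H →L[ℂ] H)), ∃ x ∈ M, j x = y
  pos : ∀ x ∈ M, 0 ≤ (⟪(x * j x) Ω, Ω⟫_ℂ).re ∧ (⟪(x * j x) Ω, Ω⟫_ℂ).im = 0

/-- A unital `*`-endomorphism of `M` preserving the (faithful, normal) vector state of `Ω`. -/
structure StateEndo (M : VonNeumannAlgebra H) (Ω : H)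
    (θ : (H →L[ℂ] H) → (H →L[ℂ] H)) : Prop where
  mapsTo : Set.MapsTo θ (M : Set (H →L[ℂ] H)) (M : Set (H →L[ℂ] H))
  unital : θ 1 = 1
  hom : IsStarHomOn (M : Set (H →L[ℂ] H)) θ
  state : ∀ x ∈ M, ⟪θ x Ω, Ω⟫_ℂ = ⟪x Ω, Ω⟫_ℂ

/-- `u` is the isometry of the GNS space implementing `θ`:  `u x Ω = θ(x) Ω`. -/
def Implements (M : VonNeumannAlgebra H) (Ω : H) (θ : (H →L[ℂ] H) → (H →L[ℂ] H))
    (u : H →L[ℂ] H) : Prop :=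
  (∀ ξ : H, ‖u ξ‖ = ‖ξ‖) ∧ ∀ x ∈ M, u (x Ω) = θ x Ω

/-- `u` commutes with the modular conjugation `J`. -/
def CommutesWithJ (J : H → H) (u : H →L[ℂ] H) : Prop := ∀ ξ : H, u (J ξ) = J (u ξ)

/-- `θ` is equi-modular: its implementing isometry commutes with `J`. -/
def EquiModular (M : VonNeumannAlgebra H) (Ω : H) (J : H → H)
    (θ : (H →L[ℂ] H) → (H →L[ℂ] H)) : Prop :=
  ∃ u : H →L[ℂ] H, Implements M Ω θ u ∧ CommutesWithJ J u

/-- `Θ = θ⁽²⁾` is a unital normal `*`-endomorphism of `B(L²(M,φ))` extending `θ` and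
`j ∘ θ ∘ j`. -/
structure IsExtension (M : VonNeumannAlgebra H) (j : (H →L[ℂ] H) → (H →L[ℂ] H))
    (θ : (H →L[ℂ] H) → (H →L[ℂ] H)) (Θ : (H →L[ℂ] H) → (H →L[ℂ] H)) : Prop where
  hom : IsStarHomOn (Set.univ : Set (H →L[ℂ] H)) Θ
  unital : Θ 1 = 1
  normal : IsNormalMapOn (Set.univ : Set (H →L[ℂ] H)) Θ
  onM : ∀ x ∈ M, Θ x = θ x
  onComm : ∀ x ∈ M, Θ (j x) = j (θ x)

/-- `θ` is extendable. -/
def Extendable (M : VonNeumannAlgebra H) (j : (H →L[ℂ] H) → (H →L[ℂ] H))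
    (θ : (H →L[ℂ] H) → (H →L[ℂ] H)) : Prop :=
  ∃ Θ : (H →L[ℂ] H) → (H →L[ℂ] H), IsExtension M j θ Θ

/-- An `E₀`-semigroup on the von Neumann probability space `(M, ⟨·Ω,Ω⟩)`. -/
structure IsE0Semigroup (M : VonNeumannAlgebra H) (Ω : H)
    (α : ℝ → (H →L[ℂ] H) → (H →L[ℂ] H)) : Prop where
  endo : ∀ t : ℝ, 0 ≤ t → StateEndo M Ω (α t)
  id0 : ∀ x ∈ M, α 0 x = x
  semigroup : ∀ s t : ℝ, 0 ≤ s → 0 ≤ t → ∀ x ∈ M, α s (α t x) = α (s + t) x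
  weakCont : ∀ x ∈ M, ∀ ξ η : H, ContinuousOn (fun t : ℝ => ⟪α t x ξ, η⟫_ℂ) (Set.Ici 0)

/-! ### Auxiliary material for the proof -/

section RankOne

/-- The rank-one operator `|ξ⟩⟨η|` (mathlib inner-product convention). -/
def rankOne (ξ η : H) : H →L[ℂ] H := (innerSL ℂ η).smulRight ξ

@[simp] lemma rankOne_apply (ξ η ζ : H) : rankOne ξ η ζ = ⟪η, ζ⟫_ℂ • ξ := rfl

lemma mul_rankOne (a : H →L[ℂ] H) (ξ η : H) : a * rankOne ξ η = rankOne (a ξ) η := by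
  ext ζ
  simp [ContinuousLinearMap.mul_apply, map_smul]

lemma rankOne_mul_rankOne (a b c d : H) :
    rankOne a b * rankOne c d = ⟪b, c⟫_ℂ • rankOne a d := by
  ext ζ
  simp only [ContinuousLinearMap.mul_apply, rankOne_apply, inner_smul_right,
    ContinuousLinearMap.smul_apply, smul_smul]
  ring_nf

lemma star_rankOne (ξ η : H) : star (rankOne ξ η) = rankOne η ξ := by
  rw [ContinuousLinearMap.star_eq_adjoint]
  refine ContinuousLinearMap.ext fun ζ => ext_inner_right ℂ fun ω => ?_
  rw [ContinuousLinearMap.adjoint_inner_left]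
  simp only [rankOne_apply, inner_smul_left, inner_smul_right, inner_conj_symm]
  ring

lemma rankOne_add_left (ξ ξ' η : H) :
    rankOne (ξ + ξ') η = rankOne ξ η + rankOne ξ' η := by
  ext ζ; simp [smul_add]

lemma rankOne_smul_left (c : ℂ) (ξ η : H) :
    rankOne (c • ξ) η = c • rankOne ξ η := by
  ext ζ
  simp only [rankOne_apply, ContinuousLinearMap.smul_apply]
  rw [smul_comm]

lemma isProjection_rankOne {g : H} (hg : ‖g‖ = 1) : IsProjection (rankOne g g) := by
  constructor
  · rw [IsSelfAdjoint, star_rankOne]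
  · rw [rankOne_mul_rankOne, inner_self_eq_norm_sq_to_K, hg]
    norm_num

end RankOne

section JLemmas

variable {M : VonNeumannAlgebra H} {Ω : H} {J : H → H} {j : (H →L[ℂ] H) → (H →L[ℂ] H)}

lemma StandardForm.jmul (hSF : StandardForm M Ω J j) (x y : H →L[ℂ] H) :
    j (x * y) = j x * j y := by
  ext ξ
  simp only [ContinuousLinearMap.mul_apply, hSF.jdef, hSF.Jinvol]

lemma StandardForm.jone (hSF : StandardForm M Ω J j) : j 1 = 1 := by
  ext ξ
  simp only [hSF.jdef, ContinuousLinearMap.one_apply, hSF.Jinvol]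

lemma StandardForm.jj (hSF : StandardForm M Ω J j) (x : H →L[ℂ] H) : j (j x) = x := by
  ext ξ
  simp only [hSF.jdef, hSF.Jinvol]

lemma StandardForm.jstar (hSF : StandardForm M Ω J j) (x : H →L[ℂ] H) :
    j (star x) = star (j x) := by
  refine ContinuousLinearMap.ext fun ξ => ext_inner_right ℂ fun η => ?_
  have h1 : ⟪(star (j x)) ξ, η⟫_ℂ = ⟪ξ, j x η⟫_ℂ := by
    rw [ContinuousLinearMap.star_eq_adjoint, ContinuousLinearMap.adjoint_inner_left]
  rw [h1, hSF.jdef, hSF.jdef x η]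
  conv_lhs => rw [← hSF.Jinvol η]
  rw [hSF.Jinner, ContinuousLinearMap.star_eq_adjoint,
    ContinuousLinearMap.adjoint_inner_right]
  conv_lhs => rw [← hSF.Jinvol (x (J η))]
  rw [hSF.Jinner]

lemma StandardForm.jmem (hSF : StandardForm M Ω J j) {y : H →L[ℂ] H}
    (hy : y ∈ Set.centralizer (M : Set (H →L[ℂ] H))) : j y ∈ M := by
  obtain ⟨x, hxM, hxy⟩ := hSF.jsurj y hy
  rw [← hxy, hSF.jj]
  exact hxM

end JLemmas

section Intertwiners

lemma hasSum_congr_fun {γ : Type*} {X : Type*} [AddCommMonoid X] [TopologicalSpace X]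
    {f g : γ → X} {x : X} (h : HasSum f x) (he : ∀ i, f i = g i) : HasSum g x := by
  rwa [funext he] at h

lemma hasSum_mem_closed {γ : Type*} {S : Submodule ℂ H} (hS : IsClosed (S : Set H))
    {f : γ → H} {x : H} (hf : HasSum f x) (hmem : ∀ i, f i ∈ S) : x ∈ S :=
  hS.mem_of_tendsto hf (Filter.Eventually.of_forall fun s => S.sum_mem fun i _ => hmem i)

/-- From a unital, completely additive `*`-endomorphism of `B(H)` and a unit vector, produce a
family of intertwining isometries with mutually orthogonal ranges summing to the identity. -/
theorem exists_intertwiners (Ω : H) (hΩ : ‖Ω‖ = 1)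
    (Φ : (H →L[ℂ] H) → (H →L[ℂ] H))
    (hhom : IsStarHomOn (Set.univ : Set (H →L[ℂ] H)) Φ)
    (hone : Φ 1 = 1)
    (hnorm : IsNormalMapOn (Set.univ : Set (H →L[ℂ] H)) Φ) :
    ∃ (ι : Type) (v : ι → (H →L[ℂ] H)),
      (∀ (i : ι) (a : H →L[ℂ] H), Φ a * v i = v i * a) ∧
      (∀ ξ : H, HasSum (fun i => v i (star (v i) ξ)) ξ) := by
  classical
  have hmul : ∀ a b : H →L[ℂ] H, Φ (a * b) = Φ a * Φ b := fun a b =>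
    hhom.map_mul a (Set.mem_univ a) b (Set.mem_univ b)
  have hstar : ∀ a : H →L[ℂ] H, Φ (star a) = star (Φ a) := fun a =>
    hhom.map_star a (Set.mem_univ a)
  have hsmul : ∀ (c : ℂ) (a : H →L[ℂ] H), Φ (c • a) = c • Φ a := fun c a =>
    hhom.map_smul c a (Set.mem_univ a)
  have hΩ1 : ⟪Ω, Ω⟫_ℂ = 1 := by
    rw [inner_self_eq_norm_sq_to_K, hΩ]; norm_num
  set P : H →L[ℂ] H := Φ (rankOne Ω Ω) with hPdef
  have hPP : P * P = P := by
    rw [hPdef, ← hmul, rankOne_mul_rankOne, hΩ1, one_smul]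
  have hPstar : star P = P := by rw [hPdef, ← hstar, star_rankOne]
  have hPsa : ∀ ξ η : H, ⟪P ξ, η⟫_ℂ = ⟪ξ, P η⟫_ℂ := by
    intro ξ η
    conv_lhs => rw [← hPstar]
    rw [ContinuousLinearMap.star_eq_adjoint, ContinuousLinearMap.adjoint_inner_left]
  -- the space of `P`-fixed vectors
  set K : Submodule ℂ H := LinearMap.ker ((P - 1 : H →L[ℂ] H) : H →ₗ[ℂ] H) with hK
  have hKc : IsClosed (K : Set H) := ContinuousLinearMap.isClosed_ker _
  haveI : CompleteSpace K := hKc.completeSpace_coe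
  have hmemK : ∀ ξ : H, ξ ∈ K ↔ P ξ = ξ := by
    intro ξ
    rw [hK, LinearMap.mem_ker, ContinuousLinearMap.coe_coe, ContinuousLinearMap.sub_apply,
      ContinuousLinearMap.one_apply, sub_eq_zero]
  obtain ⟨wι, b, hbco⟩ := exists_hilbertBasis ℂ K
  set f : wι → H := fun i => ((i : K) : H) with hfdef
  have hPf : ∀ i, P (f i) = f i := fun i => (hmemK _).mp (i : K).2
  have hfinner : ∀ i k : wι, ⟪f i, f k⟫_ℂ = if i = k then 1 else 0 := by
    intro i k
    have h := b.orthonormal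
    rw [hbco, orthonormal_iff_ite] at h
    have h1 := h i k
    rw [show (Subtype.val i : K) = (i : K) from rfl,
      show (Subtype.val k : K) = (k : K) from rfl, Submodule.coe_inner] at h1
    exact h1
  have hPsum : ∀ ζ : H, HasSum (fun i => ⟪f i, ζ⟫_ℂ • f i) (P ζ) := by
    intro ζ
    have hmem : P ζ ∈ K := (hmemK _).mpr (by rw [← ContinuousLinearMap.mul_apply, hPP])
    refine hasSum_congr_fun ((b.hasSum_repr ⟨P ζ, hmem⟩).mapL K.subtypeL) fun i => ?_
    rw [map_smul, Submodule.subtypeL_apply, b.repr_apply_apply, hbco, Submodule.coe_inner]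
    show ⟪f i, P ζ⟫_ℂ • f i = ⟪f i, ζ⟫_ℂ • f i
    rw [← hPsa, hPf]
  -- inner products of `Φ (rankOne · Ω)` images
  have hVinner0 : ∀ (i k : wι) (ξ η : H),
      ⟪Φ (rankOne ξ Ω) (f i), Φ (rankOne η Ω) (f k)⟫_ℂ = ⟪ξ, η⟫_ℂ * ⟪f i, f k⟫_ℂ := by
    intro i k ξ η
    have h1 : ⟪Φ (rankOne ξ Ω) (f i), Φ (rankOne η Ω) (f k)⟫_ℂ
        = ⟪(star (Φ (rankOne η Ω)) * Φ (rankOne ξ Ω)) (f i), f k⟫_ℂ := by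
      rw [ContinuousLinearMap.mul_apply, ContinuousLinearMap.star_eq_adjoint,
        ContinuousLinearMap.adjoint_inner_left]
    rw [h1, ← hstar, ← hmul, star_rankOne, rankOne_mul_rankOne, hsmul,
      ContinuousLinearMap.smul_apply, inner_smul_left, inner_conj_symm, ← hPdef, hPf i]
  -- the intertwining isometries
  set v : wι → (H →L[ℂ] H) := fun i =>
    LinearMap.mkContinuous
      { toFun := fun ξ => Φ (rankOne ξ Ω) (f i)
        map_add' := fun ξ ξ' => by
          show Φ (rankOne (ξ + ξ') Ω) (f i) = Φ (rankOne ξ Ω) (f i) + Φ (rankOne ξ' Ω) (f i)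
          rw [rankOne_add_left, hhom.map_add _ (Set.mem_univ _) _ (Set.mem_univ _),
            ContinuousLinearMap.add_apply]
        map_smul' := fun c ξ => by
          show Φ (rankOne (c • ξ) Ω) (f i) = (RingHom.id ℂ) c • Φ (rankOne ξ Ω) (f i)
          rw [rankOne_smul_left, hsmul, ContinuousLinearMap.smul_apply]; rfl }
      1 (fun ξ => by
        have h1 := hVinner0 i i ξ ξ
        rw [hfinner i i, if_pos rfl, mul_one] at h1
        have h2 : ‖Φ (rankOne ξ Ω) (f i)‖ ^ 2 = ‖ξ‖ ^ 2 := by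
          rw [inner_self_eq_norm_sq_to_K, inner_self_eq_norm_sq_to_K] at h1
          exact_mod_cast h1
        have h3 : ‖Φ (rankOne ξ Ω) (f i)‖ = ‖ξ‖ := by
          nlinarith [norm_nonneg (Φ (rankOne ξ Ω) (f i)), norm_nonneg ξ]
        simp [h3]) with hvdef
  have hv_apply : ∀ (i : wι) (ξ : H), v i ξ = Φ (rankOne ξ Ω) (f i) := fun i ξ => rfl
  have hint : ∀ (i : wι) (a : H →L[ℂ] H), Φ a * v i = v i * a := by
    intro i a
    ext ξ
    rw [ContinuousLinearMap.mul_apply, ContinuousLinearMap.mul_apply, hv_apply, hv_apply,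
      ← ContinuousLinearMap.mul_apply (Φ a), ← hmul, mul_rankOne]
  -- a Hilbert basis of H
  obtain ⟨s, gb, hgbco⟩ := exists_hilbertBasis ℂ H
  set g : s → H := fun m => gb m with hgdef
  have hgON : Orthonormal ℂ g := gb.orthonormal
  have hgsum : ∀ ξ : H, HasSum (fun m => ⟪g m, ξ⟫_ℂ • g m) ξ := by
    intro ξ
    refine hasSum_congr_fun (gb.hasSum_repr ξ) fun m => ?_
    rw [gb.repr_apply_apply]
  have hginner := orthonormal_iff_ite.mp hgON
  -- the combined orthonormal family
  set e : wι × s → H := fun im => v im.1 (g im.2) with hedef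
  have heinner : ∀ im kl : wι × s,
      ⟪e im, e kl⟫_ℂ = ⟪g im.2, g kl.2⟫_ℂ * ⟪f im.1, f kl.1⟫_ℂ := by
    intro im kl
    rw [hedef]
    show ⟪v im.1 (g im.2), v kl.1 (g kl.2)⟫_ℂ = _
    rw [hv_apply, hv_apply]
    exact hVinner0 im.1 kl.1 (g im.2) (g kl.2)
  have heON : Orthonormal ℂ e := by
    rw [orthonormal_iff_ite]
    rintro ⟨i, m⟩ ⟨k, l⟩
    rw [heinner, hginner m l, hfinner i k]
    by_cases him : i = k
    · by_cases hml : m = l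
      · subst him; subst hml; simp
      · simp [him, hml, Ne.symm hml, Prod.ext_iff]
    · simp [him, Prod.ext_iff]
  -- totality of the combined family
  have hmemSp : ∀ ξ : H,
      ξ ∈ (Submodule.span ℂ (Set.range e)).topologicalClosure := by
    have hSpc : IsClosed ((Submodule.span ℂ (Set.range e)).topologicalClosure : Set H) :=
      Submodule.isClosed_topologicalClosure _
    intro ξ
    have hQsum : HasSum (fun m => Φ (rankOne (g m) (g m)) ξ) ξ := by
      have h0 : ∀ ζ : H, HasSum (fun m => rankOne (g m) (g m) ζ) ((1 : H →L[ℂ] H) ζ) := by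
        intro ζ
        simpa using hgsum ζ
      have h1 := hnorm (fun m => rankOne (g m) (g m)) 1 (fun _ => Set.mem_univ _)
        (Set.mem_univ _) (fun m => isProjection_rankOne (hgON.1 m))
        (fun m l hml => by
          rw [rankOne_mul_rankOne, hginner m l, if_neg hml, zero_smul]) h0 ξ
      rwa [hone, ContinuousLinearMap.one_apply] at h1
    refine hasSum_mem_closed hSpc hQsum ?_
    intro m
    have hfact : rankOne (g m) (g m)
        = rankOne (g m) Ω * (rankOne Ω Ω * star (rankOne (g m) Ω)) := by
      rw [star_rankOne, rankOne_mul_rankOne, hΩ1, one_smul, rankOne_mul_rankOne, hΩ1,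
        one_smul]
    have hrw : Φ (rankOne (g m) (g m)) ξ
        = Φ (rankOne (g m) Ω) (P (Φ (star (rankOne (g m) Ω)) ξ)) := by
      rw [hfact, hmul, hmul, ← hPdef]
      rfl
    rw [hrw]
    have h2 := (hPsum (Φ (star (rankOne (g m) Ω)) ξ)).mapL (Φ (rankOne (g m) Ω))
    refine hasSum_mem_closed hSpc h2 ?_
    intro i
    rw [map_smul]
    refine Submodule.smul_mem _ _ ?_
    refine Submodule.le_topologicalClosure _ (Submodule.subset_span ?_)
    exact ⟨(i, m), (hv_apply i (g m)).symm⟩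
  -- Parseval for the combined family
  have hesum : ∀ ξ : H, HasSum (fun im : wι × s => ⟪e im, ξ⟫_ℂ • e im) ξ := by
    intro ξ
    have hsp : ⊤ ≤ (Submodule.span ℂ (Set.range e)).topologicalClosure :=
      (Submodule.eq_top_iff'.mpr hmemSp).ge
    have hb2 : ⇑(HilbertBasis.mk heON hsp) = e := HilbertBasis.coe_mk heON hsp
    refine hasSum_congr_fun ((HilbertBasis.mk heON hsp).hasSum_repr ξ) fun im => ?_
    rw [HilbertBasis.repr_apply_apply, hb2]
  refine ⟨wι, v, hint, fun ξ => ?_⟩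
  refine HasSum.prod_fiberwise (hesum ξ) fun i => ?_
  refine hasSum_congr_fun ((hgsum (star (v i) ξ)).mapL (v i)) fun m => ?_
  rw [map_smul]
  have he' : e (i, m) = v i (g m) := rfl
  rw [he']
  congr 1
  rw [ContinuousLinearMap.star_eq_adjoint, ContinuousLinearMap.adjoint_inner_right]

end Intertwiners

section EndoExt

/-- Two unital, completely additive `*`-endomorphisms of `B(H)` which agree on a factor `M`
and on its commutant agree everywhere. -/
theorem endo_ext (M : VonNeumannAlgebra H) (hM : IsFactorSet (M : Set (H →L[ℂ] H)))
    (Ω : H) (hΩ : ‖Ω‖ = 1)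
    (Φ Ψ : (H →L[ℂ] H) → (H →L[ℂ] H))
    (hΦh : IsStarHomOn (Set.univ : Set (H →L[ℂ] H)) Φ) (hΦ1 : Φ 1 = 1)
    (hΦn : IsNormalMapOn (Set.univ : Set (H →L[ℂ] H)) Φ)
    (hΨh : IsStarHomOn (Set.univ : Set (H →L[ℂ] H)) Ψ) (hΨ1 : Ψ 1 = 1)
    (hΨn : IsNormalMapOn (Set.univ : Set (H →L[ℂ] H)) Ψ)
    (hagM : ∀ x ∈ (M : Set (H →L[ℂ] H)), Φ x = Ψ x)
    (hagM' : ∀ y ∈ Set.centralizer (M : Set (H →L[ℂ] H)), Φ y = Ψ y) :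
    ∀ a : H →L[ℂ] H, Φ a = Ψ a := by
  obtain ⟨ι, v, hvI, hvS⟩ := exists_intertwiners Ω hΩ Φ hΦh hΦ1 hΦn
  obtain ⟨κ, w, hwI, hwS⟩ := exists_intertwiners Ω hΩ Ψ hΨh hΨ1 hΨn
  -- `star (w k) * Ψ a = a * star (w k)`
  have hwadj : ∀ (k : κ) (a : H →L[ℂ] H), star (w k) * Ψ a = a * star (w k) := by
    intro k a
    have h1 := hwI k (star a)
    have h2 := congrArg star h1
    rw [star_mul, star_mul, star_star] at h2
    rwa [← hΨh.map_star (star a) (Set.mem_univ _), star_star] at h2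
  -- `star (w k) * v i` commutes with anything on which `Φ` and `Ψ` agree
  have hcomm : ∀ (k : κ) (i : ι) (a : H →L[ℂ] H), Φ a = Ψ a →
      (star (w k) * v i) * a = a * (star (w k) * v i) := by
    intro k i a ha
    calc (star (w k) * v i) * a = star (w k) * (v i * a) := by rw [mul_assoc]
      _ = star (w k) * (Φ a * v i) := by rw [hvI i a]
      _ = (star (w k) * Ψ a) * v i := by rw [ha, mul_assoc]
      _ = (a * star (w k)) * v i := by rw [hwadj k a]
      _ = a * (star (w k) * v i) := by rw [mul_assoc]
  -- by factoriality these relative intertwiners are scalars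
  have hscal : ∀ (k : κ) (i : ι), ∃ c : ℂ, star (w k) * v i = c • 1 := by
    intro k i
    have hmemM' : star (w k) * v i ∈ Set.centralizer (M : Set (H →L[ℂ] H)) := by
      rw [Set.mem_centralizer_iff]
      intro m hm
      exact (hcomm k i m (hagM m hm)).symm
    have hmemM : star (w k) * v i ∈ (M : Set (H →L[ℂ] H)) := by
      rw [← M.centralizer_centralizer]
      rw [Set.mem_centralizer_iff]
      intro y hy
      exact (hcomm k i y (hagM' y hy)).symm
    exact hM _ hmemM fun y hy => hcomm k i y (hagM y hy)
  -- main computation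
  intro a
  ext ξ
  have hstep1 : HasSum (fun i => v i (a (star (v i) ξ))) (Φ a ξ) := by
    refine hasSum_congr_fun ((hvS ξ).mapL (Φ a)) fun i => ?_
    rw [← ContinuousLinearMap.mul_apply, hvI i a, ContinuousLinearMap.mul_apply]
  have hstep1' : HasSum (fun k => w k (a (star (w k) ξ))) (Ψ a ξ) := by
    refine hasSum_congr_fun ((hwS ξ).mapL (Ψ a)) fun k => ?_
    rw [← ContinuousLinearMap.mul_apply, hwI k a, ContinuousLinearMap.mul_apply]
  have hstep2 : ∀ k, star (w k) (Φ a ξ) = a (star (w k) ξ) := by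
    intro k
    have h1 : HasSum (fun i => (a * star (w k)) (v i (star (v i) ξ)))
        (star (w k) (Φ a ξ)) := by
      refine hasSum_congr_fun (hstep1.mapL (star (w k))) fun i => ?_
      obtain ⟨c, hc⟩ := hscal k i
      calc star (w k) (v i (a (star (v i) ξ)))
          = (star (w k) * v i) (a (star (v i) ξ)) := rfl
        _ = c • a (star (v i) ξ) := by
            rw [hc, ContinuousLinearMap.smul_apply, ContinuousLinearMap.one_apply]
        _ = a (c • star (v i) ξ) := by rw [map_smul]
        _ = a ((star (w k) * v i) (star (v i) ξ)) := by
            rw [hc, ContinuousLinearMap.smul_apply, ContinuousLinearMap.one_apply]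
        _ = (a * star (w k)) (v i (star (v i) ξ)) := rfl
    have h2 := (hvS ξ).mapL (a * star (w k))
    have h3 := h1.unique h2
    rw [ContinuousLinearMap.mul_apply] at h3
    exact h3
  have h4 : HasSum (fun k => w k (a (star (w k) ξ))) (Φ a ξ) := by
    refine hasSum_congr_fun (hwS (Φ a ξ)) fun k => ?_
    rw [hstep2 k]
  exact h4.unique hstep1'

end EndoExt


/-- **Proposition 5.7.**  Suppose `β` is an `E₀`-semigroup on the factorial probability space
`(M, φ)` in standard form which is a cocycle perturbation of the `E₀`-semigroup `α` via the
unitary cocycle `{u_t} ⊆ M`.  Then (1) `{j(u_t)}` is a cocycle exhibiting `β′` as a cocycle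
perturbation of `α′`; and (2) if each `α_t`, `β_t` is equi-modular and extendable, with
extensions `α⁽²⁾`, `β⁽²⁾` to `B(L²(M,φ))`, then `{u_t j(u_t)}` is a cocycle exhibiting `β⁽²⁾`
as a cocycle perturbation of `α⁽²⁾`. -/
theorem proposition_5_7
    (M : VonNeumannAlgebra H) (Ω : H) (J : H → H) (j : (H →L[ℂ] H) → (H →L[ℂ] H))
    (hSF : StandardForm M Ω J j) (hM : IsFactorSet (M : Set (H →L[ℂ] H)))
    (α β : ℝ → (H →L[ℂ] H) → (H →L[ℂ] H))
    (hα : IsE0Semigroup M Ω α) (hβ : IsE0Semigroup M Ω β)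
    -- `{u t}` is a weakly continuous unitary `α`-cocycle in `M` with `β_t = Ad u_t ∘ α_t`:
    (u : ℝ → (H →L[ℂ] H))
    (humem : ∀ t : ℝ, 0 ≤ t → u t ∈ M)
    (huunit : ∀ t : ℝ, 0 ≤ t → star (u t) * u t = 1 ∧ u t * star (u t) = 1)
    (hucoc : ∀ s t : ℝ, 0 ≤ s → 0 ≤ t → u (s + t) = u s * α s (u t))
    (hucont : ∀ ξ η : H, ContinuousOn (fun t : ℝ => ⟪u t ξ, η⟫_ℂ) (Set.Ici 0))
    (hpert : ∀ t : ℝ, 0 ≤ t → ∀ x ∈ M, β t x = u t * α t x * star (u t)) :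
    -- (1) `{j(u_t)}` exhibits `β′` as a cocycle perturbation of `α′`:
    ((∀ t : ℝ, 0 ≤ t →
        j (u t) ∈ Set.centralizer (M : Set (H →L[ℂ] H)) ∧
        star (j (u t)) * j (u t) = 1 ∧ j (u t) * star (j (u t)) = 1) ∧
      (∀ s t : ℝ, 0 ≤ s → 0 ≤ t → j (u (s + t)) = j (u s) * j (α s (u t))) ∧
      (∀ ξ η : H, ContinuousOn (fun t : ℝ => ⟪j (u t) ξ, η⟫_ℂ) (Set.Ici 0)) ∧
      (∀ t : ℝ, 0 ≤ t → ∀ y ∈ Set.centralizer (M : Set (H →L[ℂ] H)),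
        j (β t (j y)) = j (u t) * j (α t (j y)) * star (j (u t)))) ∧
    -- (2) if each `α_t` and `β_t` is equi-modular and extendable, with extensions `α⁽²⁾ = A`
    -- and `β⁽²⁾ = B`, then `{u_t j(u_t)}` exhibits `β⁽²⁾` as a cocycle perturbation of `α⁽²⁾`:
    ((∀ t : ℝ, 0 ≤ t → EquiModular M Ω J (α t) ∧ Extendable M j (α t) ∧
        EquiModular M Ω J (β t) ∧ Extendable M j (β t)) →
      ∀ A B : ℝ → (H →L[ℂ] H) → (H →L[ℂ] H),
        (∀ t : ℝ, 0 ≤ t →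
          IsStarHomOn (Set.univ : Set (H →L[ℂ] H)) (A t) ∧ A t 1 = 1 ∧
          IsNormalMapOn (Set.univ : Set (H →L[ℂ] H)) (A t) ∧
          ∀ x ∈ M, ∀ y ∈ Set.centralizer (M : Set (H →L[ℂ] H)),
            A t (x * y) = α t x * j (α t (j y))) →
        (∀ t : ℝ, 0 ≤ t →
          IsStarHomOn (Set.univ : Set (H →L[ℂ] H)) (B t) ∧ B t 1 = 1 ∧
          IsNormalMapOn (Set.univ : Set (H →L[ℂ] H)) (B t) ∧
          ∀ x ∈ M, ∀ y ∈ Set.centralizer (M : Set (H →L[ℂ] H)),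
            B t (x * y) = β t x * j (β t (j y))) →
        (∀ t : ℝ, 0 ≤ t →
          star (u t * j (u t)) * (u t * j (u t)) = 1 ∧
          (u t * j (u t)) * star (u t * j (u t)) = 1) ∧
        (∀ s t : ℝ, 0 ≤ s → 0 ≤ t →
          u (s + t) * j (u (s + t)) = (u s * j (u s)) * A s (u t * j (u t))) ∧
        ∀ t : ℝ, 0 ≤ t → ∀ a : H →L[ℂ] H,
          B t a = (u t * j (u t)) * A t a * star (u t * j (u t))) := by
  constructor
  · -- Part (1)
    refine ⟨?_, ?_, ?_, ?_⟩
    · intro t ht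
      refine ⟨hSF.jmapsTo _ (humem t ht), ?_, ?_⟩
      · rw [← hSF.jstar, ← hSF.jmul, (huunit t ht).1, hSF.jone]
      · rw [← hSF.jstar, ← hSF.jmul, (huunit t ht).2, hSF.jone]
    · intro s t hs ht
      rw [hucoc s t hs ht, hSF.jmul]
    · intro ξ η
      have h1 : ∀ r : ℝ, ⟪j (u r) ξ, η⟫_ℂ = (starRingEnd ℂ) ⟪u r (J ξ), J η⟫_ℂ := by
        intro r
        rw [hSF.jdef]
        conv_lhs => rw [← hSF.Jinvol η]
        rw [hSF.Jinner]
        exact (inner_conj_symm _ _).symm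
      rw [show (fun r : ℝ => ⟪j (u r) ξ, η⟫_ℂ)
          = fun r : ℝ => (starRingEnd ℂ) ⟪u r (J ξ), J η⟫_ℂ from funext h1]
      exact Continuous.comp_continuousOn RCLike.continuous_conj (hucont (J ξ) (J η))
    · intro t ht y hy
      have hjy : j y ∈ M := hSF.jmem hy
      rw [hpert t ht (j y) hjy, hSF.jmul, hSF.jmul, hSF.jstar]
  · -- Part (2)
    intro _hEM A B hA hB
    have hjuM' : ∀ t : ℝ, 0 ≤ t → j (u t) ∈ Set.centralizer (M : Set (H →L[ℂ] H)) :=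
      fun t ht => hSF.jmapsTo _ (humem t ht)
    have hwl : ∀ t : ℝ, 0 ≤ t → star (u t * j (u t)) * (u t * j (u t)) = 1 := by
      intro t ht
      rw [star_mul, mul_assoc, ← mul_assoc (star (u t)) (u t), (huunit t ht).1, one_mul,
        ← hSF.jstar, ← hSF.jmul, (huunit t ht).1, hSF.jone]
    have hwr : ∀ t : ℝ, 0 ≤ t → (u t * j (u t)) * star (u t * j (u t)) = 1 := by
      intro t ht
      rw [star_mul, mul_assoc, ← mul_assoc (j (u t)) (star (j (u t))), ← hSF.jstar,
        ← hSF.jmul, (huunit t ht).2, hSF.jone, one_mul, (huunit t ht).2]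
    refine ⟨fun t ht => ⟨hwl t ht, hwr t ht⟩, ?_, ?_⟩
    · -- the cocycle identity for `u_t j(u_t)`
      intro s t hs ht
      have hαu : α s (u t) ∈ M := (hα.endo s hs).mapsTo (humem t ht)
      have hAs := (hA s hs).2.2.2 (u t) (humem t ht) (j (u t)) (hjuM' t ht)
      rw [hSF.jj] at hAs
      rw [hucoc s t hs ht, hSF.jmul, hAs]
      have hcomm : α s (u t) * j (u s) = j (u s) * α s (u t) :=
        Set.mem_centralizer_iff.mp (hjuM' s hs) _ hαu
      calc (u s * α s (u t)) * (j (u s) * j (α s (u t)))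
          = u s * ((α s (u t) * j (u s)) * j (α s (u t))) := by
            simp only [mul_assoc]
        _ = u s * ((j (u s) * α s (u t)) * j (α s (u t))) := by rw [hcomm]
        _ = (u s * j (u s)) * (α s (u t) * j (α s (u t))) := by
            simp only [mul_assoc]
    · -- the perturbation identity on all of `B(H)`
      intro t ht a
      obtain ⟨hAh, hA1, hAn, hAprod⟩ := hA t ht
      obtain ⟨hBh, hB1, hBn, hBprod⟩ := hB t ht
      set W : H →L[ℂ] H := u t * j (u t) with hW
      clear_value W
      have hWl : star W * W = 1 := by rw [hW]; exact hwl t ht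
      have hWr : W * star W = 1 := by rw [hW]; exact hwr t ht
      -- pointwise facts
      have hu1 : ∀ ζ : H, star (u t) (u t ζ) = ζ := fun ζ => by
        rw [← ContinuousLinearMap.mul_apply, (huunit t ht).1, ContinuousLinearMap.one_apply]
      have hju1 : ∀ ζ : H, star (j (u t)) (j (u t) ζ) = ζ := fun ζ => by
        rw [← ContinuousLinearMap.mul_apply, ← hSF.jstar, ← hSF.jmul, (huunit t ht).1,
          hSF.jone, ContinuousLinearMap.one_apply]
      have hswap : ∀ {m c : H →L[ℂ] H}, m ∈ (M : Set (H →L[ℂ] H)) →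
          c ∈ Set.centralizer (M : Set (H →L[ℂ] H)) → ∀ ζ : H, m (c ζ) = c (m ζ) := by
        intro m c hm hc ζ
        rw [← ContinuousLinearMap.mul_apply, Set.mem_centralizer_iff.mp hc m hm,
          ContinuousLinearMap.mul_apply]
      -- the conjugated semigroup
      set Φ : (H →L[ℂ] H) → (H →L[ℂ] H) := fun x => star W * B t x * W with hΦ
      have hΦh : IsStarHomOn (Set.univ : Set (H →L[ℂ] H)) Φ := by
        constructor
        · intro x _ y _
          show star W * B t (x + y) * W = star W * B t x * W + star W * B t y * W
          rw [hBh.map_add x (Set.mem_univ x) y (Set.mem_univ y), mul_add, add_mul]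
        · intro c x _
          show star W * B t (c • x) * W = c • (star W * B t x * W)
          rw [hBh.map_smul c x (Set.mem_univ x), mul_smul_comm, smul_mul_assoc]
        · intro x _ y _
          show star W * B t (x * y) * W = (star W * B t x * W) * (star W * B t y * W)
          rw [hBh.map_mul x (Set.mem_univ x) y (Set.mem_univ y)]
          have h1 : (star W * B t x * W) * (star W * B t y * W)
              = star W * (B t x * ((W * star W) * (B t y * W))) := by
            simp only [mul_assoc]
          rw [h1, hWr, one_mul]
          simp only [mul_assoc]
        · intro x _
          show star W * B t (star x) * W = star (star W * B t x * W)
          rw [star_mul, star_mul, star_star, hBh.map_star x (Set.mem_univ x)]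
          simp only [mul_assoc]
      have hΦ1 : Φ 1 = 1 := by
        show star W * B t 1 * W = 1
        rw [hB1, mul_one, hWl]
      have hΦn : IsNormalMapOn (Set.univ : Set (H →L[ℂ] H)) Φ := by
        intro ι' p q hp hq hproj horth hsum ξ
        exact (hBn p q hp hq hproj horth hsum (W ξ)).mapL (star W)
      -- agreement on M
      have hagM : ∀ x ∈ (M : Set (H →L[ℂ] H)), Φ x = A t x := by
        intro x hx
        have hBx : B t x = β t x := by
          have h1 := hBprod x hx 1 Set.one_mem_centralizer
          rw [mul_one, hSF.jone, (hβ.endo t ht).unital, hSF.jone, mul_one] at h1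
          exact h1
        have hAx : A t x = α t x := by
          have h1 := hAprod x hx 1 Set.one_mem_centralizer
          rw [mul_one, hSF.jone, (hα.endo t ht).unital, hSF.jone, mul_one] at h1
          exact h1
        rw [hAx]
        show star W * B t x * W = α t x
        rw [hBx, hpert t ht x hx, hW, star_mul]
        have hαx : α t x ∈ M := (hα.endo t ht).mapsTo hx
        ext ζ
        simp only [ContinuousLinearMap.mul_apply]
        simp only [hu1]
        rw [hswap hαx (hjuM' t ht), hju1]
      -- agreement on the commutant
      have hagM' : ∀ y ∈ Set.centralizer (M : Set (H →L[ℂ] H)), Φ y = A t y := by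
        intro y hy
        have hjyM : j y ∈ M := hSF.jmem hy
        have hBy : B t y = j (β t (j y)) := by
          have h1 := hBprod 1 (one_mem M) y hy
          rw [one_mul, (hβ.endo t ht).unital, one_mul] at h1
          exact h1
        have hAy : A t y = j (α t (j y)) := by
          have h1 := hAprod 1 (one_mem M) y hy
          rw [one_mul, (hα.endo t ht).unital, one_mul] at h1
          exact h1
        rw [hAy]
        show star W * B t y * W = j (α t (j y))
        rw [hBy, hpert t ht (j y) hjyM, hSF.jmul, hSF.jmul, hSF.jstar, hW, star_mul]
        have hαjy : α t (j y) ∈ M := (hα.endo t ht).mapsTo hjyM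
        have hjαjy : j (α t (j y)) ∈ Set.centralizer (M : Set (H →L[ℂ] H)) :=
          hSF.jmapsTo _ hαjy
        ext ζ
        simp only [ContinuousLinearMap.mul_apply]
        rw [hswap (humem t ht) (hjuM' t ht), hju1,
          hswap (star_mem (humem t ht)) (hjuM' t ht), hju1,
          hswap (star_mem (humem t ht)) hjαjy, hu1]
      -- conclude by uniqueness
      have key := endo_ext M hM Ω hSF.unit Φ (A t) hΦh hΦ1 hΦn hAh hA1 hAn hagM hagM'
      have hsand : W * (star W * B t a * W) * star W = B t a := by
        have h1 : W * (star W * B t a * W) * star W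
            = W * (star W * (B t a * (W * star W))) := by simp only [mul_assoc]
        rw [h1, hWr, mul_one, ← mul_assoc, hWr, one_mul]
      calc B t a = W * (star W * B t a * W) * star W := hsand.symm
        _ = W * Φ a * star W := rfl
        _ = W * A t a * star W := by rw [key a]

end Paper
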